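/- Let μ be a σ-finite Radon measure on ℝ² with no atoms. Then there exists θ_0 ∈ [0, π) such that every line in direction θ_0 and every line in direction θ_0 + π/2 has μ-measure zero. -/
import Mathlib

open MeasureTheory Set Real

/-- The line through `p` in the direction `(cos θ, sin θ)`. -/
def lineDir (θ : ℝ) (p : ℝ × ℝ) : Set (ℝ × ℝ) :=
  {x | ∃ t : ℝ, x = p + t • ((Real.cos θ, Real.sin θ) : ℝ × ℝ)}

lemma lineDir_eq (θ : ℝ) (p : ℝ × ℝ) :
    lineDir θ p = {x : ℝ × ℝ | Real.sin θ * (x.1 - p.1) - Real.cos θ * (x.2 - p.2) = 0} := by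
  ext x
  simp only [lineDir, Set.mem_setOf_eq]
  constructor
  · rintro ⟨t, rfl⟩
    simp [Prod.smul_def]
    ring
  · intro hx
    refine ⟨Real.cos θ * (x.1 - p.1) + Real.sin θ * (x.2 - p.2), ?_⟩
    have h := Real.sin_sq_add_cos_sq θ
    have hx' : Real.sin θ * (x.1 - p.1) = Real.cos θ * (x.2 - p.2) := by linarith
    have h1 : x.1 = p.1 + (Real.cos θ * (x.1 - p.1) + Real.sin θ * (x.2 - p.2)) * Real.cos θ := by
      linear_combination (-(x.1 - p.1)) * h + Real.sin θ * hx'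
    have h2 : x.2 = p.2 + (Real.cos θ * (x.1 - p.1) + Real.sin θ * (x.2 - p.2)) * Real.sin θ := by
      linear_combination (-(x.2 - p.2)) * h - Real.cos θ * hx'
    ext <;> simpa [Prod.smul_def]

lemma measurableSet_lineDir (θ : ℝ) (p : ℝ × ℝ) : MeasurableSet (lineDir θ p) := by
  rw [lineDir_eq]
  have : Continuous fun x : ℝ × ℝ => Real.sin θ * (x.1 - p.1) - Real.cos θ * (x.2 - p.2) := by
    fun_prop
  exact (isClosed_eq this continuous_const).measurableSet

lemma lineDir_inter_subsingleton {θ₁ θ₂ : ℝ} (h1 : θ₁ ∈ Set.Ico 0 π) (h2 : θ₂ ∈ Set.Ico 0 π)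
    (hne : θ₁ ≠ θ₂) (p q : ℝ × ℝ) : (lineDir θ₁ p ∩ lineDir θ₂ q).Subsingleton := by
  have hpi : (0:ℝ) < π := Real.pi_pos
  have hsin : Real.sin (θ₁ - θ₂) ≠ 0 := by
    intro h
    rcases Real.sin_eq_zero_iff.mp h with ⟨n, hn⟩
    have hb1 : -π < θ₁ - θ₂ := by linarith [h1.1, h1.2, h2.1, h2.2]
    have hb2 : θ₁ - θ₂ < π := by linarith [h1.1, h1.2, h2.1, h2.2]
    have hn0 : n = 0 := by
      have ha : (-1:ℝ) < n := by nlinarith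
      have hb : (n:ℝ) < 1 := by nlinarith
      have ha' : (-1:ℤ) < n := by exact_mod_cast ha
      have hb' : n < 1 := by exact_mod_cast hb
      omega
    rw [hn0] at hn
    simp at hn
    exact hne (by linarith)
  rintro x ⟨⟨t1, rfl⟩, hx2⟩ y ⟨⟨s1, rfl⟩, hy2⟩
  rw [lineDir_eq] at hx2 hy2
  simp only [Set.mem_setOf_eq, Prod.smul_def, Prod.fst_add, Prod.snd_add, smul_eq_mul,
    Prod.mk.injEq] at hx2 hy2 ⊢
  have key : (t1 - s1) * Real.sin (θ₁ - θ₂) = 0 := by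
    rw [Real.sin_sub]
    linear_combination hy2 - hx2
  have hts : t1 = s1 := by
    rcases mul_eq_zero.mp key with h | h
    · linarith
    · exact absurd h hsin
  rw [hts]

/-- For a σ-finite Radon measure `μ` on `ℝ²` (finite on compacts) without atoms,
there is a direction `θ_0 ∈ [0, π)` such that every line in direction `θ_0` and
every line in the perpendicular direction `θ_0 + π/2` has `μ`-measure zero. -/
theorem exists_null_perpendicular_directions (μ : Measure (ℝ × ℝ)) [SigmaFinite μ]
    [IsFiniteMeasureOnCompacts μ] (hna : ∀ x : ℝ × ℝ, μ {x} = 0) :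
    ∃ θ₀ ∈ Set.Ico 0 π,
      (∀ p : ℝ × ℝ, μ (lineDir θ₀ p) = 0) ∧
        ∀ p : ℝ × ℝ, μ (lineDir (θ₀ + π / 2) p) = 0 := by
  classical
  set Bad : Set ℝ := {θ | θ ∈ Set.Ico 0 π ∧ ∃ p : ℝ × ℝ, μ (lineDir θ p) ≠ 0} with hBad
  have hμsub : ∀ (S : Set (ℝ × ℝ)), S.Subsingleton → μ S = 0 := by
    intro S hS
    rcases hS.eq_empty_or_singleton with rfl | ⟨x, rfl⟩
    · simp
    · exact hna x
  set As : ℝ → Set (ℝ × ℝ) := fun θ =>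
    if h : θ ∈ Bad then lineDir θ h.2.choose else ∅ with hAs
  have hcnt : Bad.Countable := by
    have key := MeasureTheory.Measure.countable_meas_pos_of_disjoint_iUnion₀ (μ := μ) (As := As)
      (fun θ => ?_) ?_
    · refine key.mono fun θ hθ => ?_
      simp only [Set.mem_setOf_eq, hAs]
      rw [dif_pos hθ]
      exact pos_iff_ne_zero.mpr hθ.2.choose_spec
    · simp only [hAs]
      split_ifs with h
      · exact (measurableSet_lineDir _ _).nullMeasurableSet
      · exact MeasurableSet.nullMeasurableSet .empty
    · intro θ₁ θ₂ hne
      simp only [Function.onFun, hAs, AEDisjoint]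
      split_ifs with h1 h2 h2
      · exact hμsub _ (lineDir_inter_subsingleton h1.1 h2.1 hne _ _)
      all_goals simp
  have hcnt2 : (Bad ∪ (fun θ => θ + π / 2) ⁻¹' Bad).Countable :=
    hcnt.union (hcnt.preimage (add_left_injective _))
  have hpi : (0:ℝ) < π := Real.pi_pos
  have hIco : ¬ (Set.Ico (0:ℝ) (π/2)).Countable := by
    intro h
    have hc := Cardinal.mk_Ico_real (a := (0:ℝ)) (b := π/2) (by linarith)
    rw [← Cardinal.le_aleph0_iff_set_countable, hc] at h
    exact absurd h (by simp [Cardinal.aleph0_lt_continuum.not_ge])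
  have hex : (Set.Ico (0:ℝ) (π/2) \ (Bad ∪ (fun θ => θ + π / 2) ⁻¹' Bad)).Nonempty := by
    by_contra h
    rw [Set.not_nonempty_iff_eq_empty, Set.diff_eq_empty] at h
    exact hIco (hcnt2.mono h)
  obtain ⟨θ₀, hθmem, hθnot⟩ := hex
  have hgood : ∀ θ ∈ Set.Ico 0 π, θ ∉ Bad → ∀ p, μ (lineDir θ p) = 0 := by
    intro θ hθ hθn p
    by_contra h
    exact hθn ⟨hθ, p, h⟩
  have hm1 : θ₀ ∈ Set.Ico 0 π := ⟨hθmem.1, by linarith [hθmem.2]⟩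
  have hm2 : θ₀ + π / 2 ∈ Set.Ico 0 π := ⟨by linarith [hθmem.1], by linarith [hθmem.2]⟩
  rw [Set.mem_union] at hθnot
  push_neg at hθnot
  exact ⟨θ₀, hm1, hgood θ₀ hm1 hθnot.1, hgood _ hm2 hθnot.2⟩
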